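/- arXiv:2106.01294 — 3 statements merged into one kernel-verified Lean document; each statement's English description precedes it below -/
import Mathlib

section
/- Let 0 < C_ω < 1 and let ω : 𝔻 → (0,∞) be a C¹ weight satisfying (1−|z|²)|∇ω(z)| ≤ C_ω ω(z) for all z ∈ 𝔻. Let f be holomorphic on 𝔻 and K > 0 be such that |f′(z)|(1−|z|²)ω(z) ≤ K for all z ∈ 𝔻. Then ∫₀¹ sup_{a ∈ 𝔻, |z| ≤ r} ( ω(a) |f(φ_a(z)) − f(a)| )² dr < +∞. -/
open Complex MeasureTheory Set Filter

noncomputable section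

/-- The open unit disc in the complex plane. -/
def unitDisc : Set ℂ := Metric.ball 0 1

/-- The Möbius involution `φ_a(z) = (a - z)/(1 - conj(a) z)`. -/
def mobius (a z : ℂ) : ℂ := (a - z) / (1 - (starRingEnd ℂ) a * z)

/-- The hyperbolic distance on the unit disc. -/
def hypDist (a z : ℂ) : ℝ :=
  (1 / 2) * Real.log ((1 + ‖mobius a z‖) / (1 - ‖mobius a z‖))

/-- The `BMOA` Garsia-type seminorm squared at the point `a`, with normalized
area measure `dm = dx dy / π`. -/
def bmoaSemi (f : ℂ → ℂ) (a : ℂ) : ℝ :=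
  (Real.pi)⁻¹ * ∫ z in unitDisc, ‖deriv f z‖ ^ 2 * (1 - ‖mobius a z‖ ^ 2)

/-- `f` is an analytic function of bounded mean oscillation. -/
def IsBMOA (f : ℂ → ℂ) : Prop :=
  DifferentiableOn ℂ f unitDisc ∧ ∃ C : ℝ, ∀ a ∈ unitDisc, bmoaSemi f a ≤ C

/-- `f` is an analytic function of vanishing mean oscillation. -/
def IsVMOA (f : ℂ → ℂ) : Prop :=
  IsBMOA f ∧ ∀ ε > 0, ∃ r < 1, ∀ a ∈ unitDisc, r < ‖a‖ → bmoaSemi f a < ε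

/-- The Bloch quantity `|f'(z)| (1 - |z|²)`. -/
def blochSemi (f : ℂ → ℂ) (z : ℂ) : ℝ := ‖deriv f z‖ * (1 - ‖z‖ ^ 2)

/-- `f` belongs to the Bloch space. -/
def IsBloch (f : ℂ → ℂ) : Prop :=
  DifferentiableOn ℂ f unitDisc ∧ ∃ C : ℝ, ∀ z ∈ unitDisc, blochSemi f z ≤ C

/-- `f` belongs to the little Bloch space. -/
def IsLittleBloch (f : ℂ → ℂ) : Prop :=
  IsBloch f ∧ ∀ ε > 0, ∃ r < 1, ∀ z ∈ unitDisc, r < ‖z‖ → blochSemi f z < ε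

/-- The `BMOA` norm `|f(0)| + ‖f‖_*`. -/
def bmoaNorm (f : ℂ → ℂ) : ℝ :=
  ‖f 0‖ + Real.sqrt (⨆ a : unitDisc, bmoaSemi f (a : ℂ))

/-- The Bloch norm `|f(0)| + sup_z |f'(z)|(1-|z|²)`. -/
def blochNorm (f : ℂ → ℂ) : ℝ :=
  ‖f 0‖ + ⨆ z : unitDisc, blochSemi f (z : ℂ)

/-- `φ` is a semigroup of holomorphic self-maps of the unit disc. -/
def IsHoloSemigroup (φ : ℝ → ℂ → ℂ) : Prop :=
  (∀ t : ℝ, 0 ≤ t → DifferentiableOn ℂ (φ t) unitDisc ∧ MapsTo (φ t) unitDisc unitDisc) ∧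
  (∀ z ∈ unitDisc, φ 0 z = z) ∧
  (∀ t : ℝ, 0 ≤ t → ∀ s : ℝ, 0 ≤ s → ∀ z ∈ unitDisc, φ (t + s) z = φ t (φ s z)) ∧
  (∀ K ⊆ unitDisc, IsCompact K →
    TendstoUniformlyOn (fun t z => φ t z) id (nhdsWithin 0 (Ioi 0)) K)

/-- The maximal subspace of strong continuity `[φ_t, BMOA]`. -/
def maxSubspaceBMOA (φ : ℝ → ℂ → ℂ) : Set (ℂ → ℂ) :=
  {f | IsBMOA f ∧
    Tendsto (fun t => bmoaNorm (fun z => f (φ t z) - f z)) (nhdsWithin 0 (Ioi 0)) (nhds 0)}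

/-- The maximal subspace of strong continuity `[φ_t, 𝓑]`. -/
def maxSubspaceBloch (φ : ℝ → ℂ → ℂ) : Set (ℂ → ℂ) :=
  {f | IsBloch f ∧
    Tendsto (fun t => blochNorm (fun z => f (φ t z) - f z)) (nhdsWithin 0 (Ioi 0)) (nhds 0)}

/-- `G` is the infinitesimal generator of the semigroup `φ`. -/
def IsGenerator (φ : ℝ → ℂ → ℂ) (G : ℂ → ℂ) : Prop :=
  DifferentiableOn ℂ G unitDisc ∧
  ∀ z ∈ unitDisc,
    Tendsto (fun t : ℝ => (φ t z - z) / (t : ℂ)) (nhdsWithin 0 (Ioi 0)) (nhds (G z))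

/-- The semigroup is elliptic: its Denjoy–Wolff point lies in the disc. -/
def IsElliptic (φ : ℝ → ℂ → ℂ) : Prop :=
  ∃ τ ∈ unitDisc, ∀ t : ℝ, 0 ≤ t → φ t τ = τ

/-- The logarithmic vanishing Bloch condition (LVB) on a generator `G`. -/
def LVB (G : ℂ → ℂ) : Prop :=
  ∀ ε > 0, ∃ r < 1, ∀ z ∈ unitDisc, r < ‖z‖ →
    (1 - ‖z‖ ^ 2) / ‖G z‖ * Real.log (1 / (1 - ‖z‖ ^ 2)) < ε

/-- The logarithmic vanishing mean oscillation condition (LVMO) on a generator `G`. -/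
def LVMO (G : ℂ → ℂ) : Prop :=
  ∀ ε > 0, ∃ r < 1, ∀ a ∈ unitDisc, r < ‖a‖ →
    (Real.log (Real.exp 1 / (1 - ‖a‖ ^ 2))) ^ 2 *
      ((Real.pi)⁻¹ * ∫ z in unitDisc, (1 - ‖mobius a z‖ ^ 2) / ‖G z‖ ^ 2) < ε

/-- `f` belongs to the logarithmic little Bloch space `𝓑_{log,0}`. -/
def InBlochLog0 (f : ℂ → ℂ) : Prop :=
  ∀ ε > 0, ∃ r < 1, ∀ z ∈ unitDisc, r < ‖z‖ →
    ‖deriv f z‖ * (1 - ‖z‖ ^ 2) * Real.log (Real.exp 1 / (1 - ‖z‖ ^ 2)) < ε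

/-- `f` belongs to `VMOA_log`. -/
def InVMOAlog (f : ℂ → ℂ) : Prop :=
  ∀ ε > 0, ∃ r < 1, ∀ a ∈ unitDisc, r < ‖a‖ →
    (Real.log (Real.exp 1 / (1 - ‖a‖ ^ 2))) ^ 2 * bmoaSemi f a < ε

/-- Hyperbolic midpoint of the segment `[0, w]`. -/
def wstar (w : ℂ) : ℂ :=
  (((1 - Real.sqrt (1 - ‖w‖ ^ 2)) / ‖w‖ ^ 2 : ℝ) : ℂ) * w

/-- The building-block function `β_w(z) = Log(e / (1 + conj(w) φ_{w*}(z)))`. -/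
def betaB (w z : ℂ) : ℂ :=
  Complex.log ((Real.exp 1 : ℂ) / (1 + (starRingEnd ℂ) w * mobius (wstar w) z))

/-- The (invariant) Carleson box `S(I_u)` associated with a point `u ∈ 𝔻 \ {0}`. -/
def carlesonBox (u : ℂ) : Set ℂ :=
  {z ∈ unitDisc | ((starRingEnd ℂ) u * mobius u z).re ≤ 0}

/-- The generalized Volterra operator `T_g f(z) = ∫₀^z f(ζ) g'(ζ) dζ`. -/
def volterra (g f : ℂ → ℂ) (z : ℂ) : ℂ :=
  z * ∫ t in (0:ℝ)..1, f ((t : ℂ) * z) * deriv g ((t : ℂ) * z)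

lemma mem_unitDisc_iff {z : ℂ} : z ∈ unitDisc ↔ ‖z‖ < 1 := by
  simp [unitDisc, Metric.mem_ball, dist_zero_right]

lemma denom_ne {a z : ℂ} (ha : ‖a‖ < 1) (hz : ‖z‖ ≤ 1) :
    1 - (starRingEnd ℂ) a * z ≠ 0 := by
  intro h
  have h1 : (starRingEnd ℂ) a * z = 1 := by linear_combination -h
  have := congrArg norm h1
  rw [norm_mul, norm_one] at this
  have hna : ‖(starRingEnd ℂ) a‖ = ‖a‖ := by simp
  nlinarith [norm_nonneg z, norm_nonneg a]

lemma normSq_identity (a z : ℂ) :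
    ‖1 - (starRingEnd ℂ) a * z‖ ^ 2 - ‖a - z‖ ^ 2 = (1 - ‖a‖ ^ 2) * (1 - ‖z‖ ^ 2) := by
  have h1 : ∀ w : ℂ, ‖w‖ ^ 2 = Complex.normSq w := fun w => by
    rw [Complex.sq_norm]
  rw [h1, h1, h1, h1]
  simp only [Complex.normSq_apply, Complex.sub_re, Complex.sub_im, Complex.mul_re,
    Complex.mul_im, Complex.one_re, Complex.one_im, Complex.conj_re, Complex.conj_im]
  ring

lemma one_sub_norm_mobius_sq {a z : ℂ} (ha : ‖a‖ < 1) (hz : ‖z‖ ≤ 1) :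
    1 - ‖mobius a z‖ ^ 2
      = (1 - ‖a‖ ^ 2) * (1 - ‖z‖ ^ 2) / ‖1 - (starRingEnd ℂ) a * z‖ ^ 2 := by
  have hd := denom_ne ha hz
  have hB : (0:ℝ) < ‖1 - (starRingEnd ℂ) a * z‖ ^ 2 :=
    pow_pos (norm_pos_iff.mpr hd) 2
  rw [← normSq_identity a z]
  rw [mobius, norm_div, div_pow, eq_div_iff hB.ne', sub_mul,
    div_mul_cancel₀ _ hB.ne', one_mul]

lemma mobius_mem_unitDisc {a z : ℂ} (ha : ‖a‖ < 1) (hz : ‖z‖ < 1) :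
    ‖mobius a z‖ < 1 := by
  have hd := denom_ne ha hz.le
  have hdn : (0:ℝ) < ‖1 - (starRingEnd ℂ) a * z‖ ^ 2 :=
    pow_pos (norm_pos_iff.mpr hd) 2
  have h := one_sub_norm_mobius_sq ha hz.le
  have hpos : 0 < 1 - ‖mobius a z‖ ^ 2 := by
    rw [h]
    have h1 : (0:ℝ) < 1 - ‖a‖ ^ 2 := by nlinarith [norm_nonneg a]
    have h2 : (0:ℝ) < 1 - ‖z‖ ^ 2 := by nlinarith [norm_nonneg z]
    positivity
  nlinarith [norm_nonneg (mobius a z)]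

lemma mobius_hasDerivAt (a : ℂ) {z : ℂ} (h : 1 - (starRingEnd ℂ) a * z ≠ 0) :
    HasDerivAt (mobius a)
      (((starRingEnd ℂ) a * a - 1) / (1 - (starRingEnd ℂ) a * z) ^ 2) z := by
  have h1 : HasDerivAt (fun w : ℂ => a - w) (-1) z := by
    simpa using (hasDerivAt_id z).const_sub a
  have h2 : HasDerivAt (fun w : ℂ => 1 - (starRingEnd ℂ) a * w) (-(starRingEnd ℂ) a) z := by
    simpa using ((hasDerivAt_id z).const_mul ((starRingEnd ℂ) a)).const_sub 1
  have := h1.div h2 h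
  convert this using 1
  any_goals rfl
  field_simp
  ring

lemma norm_conj_mul_self_sub_one {a : ℂ} (ha : ‖a‖ < 1) :
    ‖(starRingEnd ℂ) a * a - 1‖ = 1 - ‖a‖ ^ 2 := by
  have h1 : (starRingEnd ℂ) a * a - 1 = (((‖a‖ ^ 2 - 1 : ℝ)) : ℂ) := by
    rw [mul_comm, Complex.mul_conj, Complex.normSq_eq_norm_sq]
    push_cast
    ring
  rw [h1, Complex.norm_real, Real.norm_eq_abs,
    abs_of_nonpos (by nlinarith [norm_nonneg a])]
  ring

set_option maxHeartbeats 2000000 in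
lemma key_bound
    (Cw : ℝ) (hCpos : 0 < Cw)
    (ω : ℂ → ℝ) (hωpos : ∀ z ∈ unitDisc, 0 < ω z)
    (hωC1 : ContDiffOn ℝ 1 ω unitDisc)
    (hreg : ∀ z ∈ unitDisc, (1 - ‖z‖ ^ 2) * ‖fderivWithin ℝ ω unitDisc z‖ ≤ Cw * ω z)
    (f : ℂ → ℂ) (hf : DifferentiableOn ℂ f unitDisc)
    (K : ℝ) (hK : 0 < K)
    (hbd : ∀ z ∈ unitDisc, ‖deriv f z‖ * (1 - ‖z‖ ^ 2) * ω z ≤ K)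
    {r : ℝ} (hr1 : r < 1) {a : ℂ} (ha : a ∈ unitDisc) {z : ℂ} (hz : ‖z‖ ≤ r) :
    ω a * ‖f (mobius a z) - f a‖
      ≤ (K * 2 ^ (Cw / 2) * (2 / Cw)) * (1 - r) ^ (-(Cw / 2)) := by
  have hO : IsOpen unitDisc := Metric.isOpen_ball
  have hA : ‖a‖ < 1 := mem_unitDisc_iff.mp ha
  set s : ℝ := ‖z‖ with hs_def
  have hs0 : 0 ≤ s := norm_nonneg z
  have hs1 : s < 1 := lt_of_le_of_lt hz hr1
  -- the curve γ and its derivative d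
  set γ : ℝ → ℂ := fun t => mobius a ((t : ℂ) * z) with hγ_def
  set d : ℝ → ℂ := fun t =>
    (((starRingEnd ℂ) a * a - 1) / (1 - (starRingEnd ℂ) a * ((t : ℂ) * z)) ^ 2) * z with hd_def
  -- basic facts for t ∈ [0,1]
  have hts : ∀ t : ℝ, t ∈ Icc (0:ℝ) 1 → ‖(t : ℂ) * z‖ = t * s := by
    intro t ht
    rw [norm_mul, Complex.norm_real, Real.norm_eq_abs, _root_.abs_of_nonneg ht.1]
  have htss : ∀ t : ℝ, t ∈ Icc (0:ℝ) 1 → t * s ≤ s := by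
    intro t ht; nlinarith [ht.1, ht.2]
  have hts1 : ∀ t : ℝ, t ∈ Icc (0:ℝ) 1 → t * s < 1 := fun t ht =>
    lt_of_le_of_lt (htss t ht) hs1
  have htspos : ∀ t : ℝ, t ∈ Icc (0:ℝ) 1 → 0 < 1 - t * s := by
    intro t ht; linarith [hts1 t ht]
  have htsnn : ∀ t : ℝ, t ∈ Icc (0:ℝ) 1 → 0 ≤ t * s := fun t ht =>
    mul_nonneg ht.1 hs0
  have hD : ∀ t : ℝ, t ∈ Icc (0:ℝ) 1 →
      1 - (starRingEnd ℂ) a * ((t : ℂ) * z) ≠ 0 := by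
    intro t ht
    apply denom_ne hA
    rw [hts t ht]; exact (hts1 t ht).le
  have hγmem : ∀ t : ℝ, t ∈ Icc (0:ℝ) 1 → γ t ∈ unitDisc := by
    intro t ht
    rw [mem_unitDisc_iff]
    exact mobius_mem_unitDisc hA (by rw [hts t ht]; exact hts1 t ht)
  have hγpos : ∀ t : ℝ, t ∈ Icc (0:ℝ) 1 → 0 < 1 - ‖γ t‖ ^ 2 := by
    intro t ht
    have := mem_unitDisc_iff.mp (hγmem t ht)
    nlinarith [norm_nonneg (γ t)]
  have hωγpos : ∀ t : ℝ, t ∈ Icc (0:ℝ) 1 → 0 < ω (γ t) := fun t ht =>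
    hωpos _ (hγmem t ht)
  -- derivative of γ
  have hγ' : ∀ t : ℝ, t ∈ Icc (0:ℝ) 1 → HasDerivAt γ (d t) t := by
    intro t ht
    have hin : HasDerivAt (fun u : ℝ => (u : ℂ) * z) z t := by
      simpa using (Complex.ofRealCLM.hasDerivAt (x := t)).mul_const z
    have hout := (mobius_hasDerivAt a (hD t ht)).hasFDerivAt.restrictScalars ℝ
    have := hout.comp_hasDerivAt t hin
    simpa [hγ_def, hd_def, Function.comp_def, mul_comm] using this
  -- norm of d
  have hd_eq : ∀ t : ℝ, t ∈ Icc (0:ℝ) 1 →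
      ‖d t‖ * (1 - (t * s) ^ 2) = (1 - ‖γ t‖ ^ 2) * s := by
    intro t ht
    have hDt := hD t ht
    have hBpos : (0:ℝ) < ‖1 - (starRingEnd ℂ) a * ((t:ℂ) * z)‖ ^ 2 :=
      pow_pos (norm_pos_iff.mpr hDt) 2
    have h1 : 1 - ‖γ t‖ ^ 2
        = (1 - ‖a‖ ^ 2) * (1 - (t * s) ^ 2)
            / ‖1 - (starRingEnd ℂ) a * ((t:ℂ) * z)‖ ^ 2 := by
      have := one_sub_norm_mobius_sq hA (z := (t:ℂ) * z)
        (by rw [hts t ht]; exact (hts1 t ht).le)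
      rw [hγ_def]
      simpa [hts t ht, abs_of_nonneg ht.1, ← hs_def] using this
    have h2 : ‖d t‖ = (1 - ‖a‖ ^ 2) * s
        / ‖1 - (starRingEnd ℂ) a * ((t:ℂ) * z)‖ ^ 2 := by
      rw [hd_def]
      simp only [norm_mul, norm_div, norm_pow]
      rw [norm_conj_mul_self_sub_one hA]
      ring
    rw [h1, h2]
    field_simp
  have hd_nonneg : ∀ t : ℝ, 0 ≤ ‖d t‖ := fun t => norm_nonneg _
  -- ω smoothness facts
  have hωderiv : ∀ t : ℝ, t ∈ Icc (0:ℝ) 1 →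
      HasFDerivAt ω (fderiv ℝ ω (γ t)) (γ t) := by
    intro t ht
    exact ((hωC1.contDiffAt (hO.mem_nhds (hγmem t ht))).differentiableAt
      one_ne_zero).hasFDerivAt
  have hfd_bound : ∀ t : ℝ, t ∈ Icc (0:ℝ) 1 →
      (1 - ‖γ t‖ ^ 2) * ‖fderiv ℝ ω (γ t)‖ ≤ Cw * ω (γ t) := by
    intro t ht
    have := hreg (γ t) (hγmem t ht)
    rwa [fderivWithin_of_isOpen hO (hγmem t ht)] at this
  -- STEP 1 : weight comparison via fencing
  set F : ℝ → ℝ := fun t =>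
    Cw * ((1/2) * (Real.log (1 + t * s) - Real.log (1 - t * s))) with hF_def
  have hF' : ∀ t : ℝ, t ∈ Icc (0:ℝ) 1 →
      HasDerivAt F (Cw * s / (1 - (t * s) ^ 2)) t := by
    intro t ht
    have hp1 : (0:ℝ) < 1 + t * s := by nlinarith [htsnn t ht]
    have hp2 : (0:ℝ) < 1 - t * s := htspos t ht
    have l1 : HasDerivAt (fun x : ℝ => 1 + x * s) s t := by
      simpa using ((hasDerivAt_id t).mul_const s).const_add 1
    have l2 : HasDerivAt (fun x : ℝ => 1 - x * s) (-s) t := by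
      simpa using ((hasDerivAt_id t).mul_const s).const_sub 1
    have := (((l1.log hp1.ne').sub (l2.log hp2.ne')).const_mul (1/2)).const_mul Cw
    convert this using 1
    any_goals rfl
    have h9 : ((1:ℝ) - (t * s) ^ 2) ≠ 0 := by nlinarith [htsnn t ht, hts1 t ht]
    have h10 : ((1:ℝ) + t * s) ≠ 0 := hp1.ne'
    have h11 : ((1:ℝ) - t * s) ≠ 0 := hp2.ne'
    rw [show (1:ℝ) - (t * s) ^ 2 = (1 + t * s) * (1 - t * s) by ring]
    rw [div_eq_iff (mul_ne_zero h10 h11)]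
    have e1 : s / (1 + t * s) * (1 + t * s) = s := div_mul_cancel₀ _ h10
    have e2 : s / (1 - t * s) * (1 - t * s) = s := div_mul_cancel₀ _ h11
    rw [neg_div]
    linear_combination (-(Cw/2) * (1 - t * s)) * e1 + (-(Cw/2) * (1 + t * s)) * e2
  have hv : ∀ t : ℝ, t ∈ Icc (0:ℝ) 1 →
      HasDerivAt (fun u => Real.log (ω a) - Real.log (ω (γ u)))
        (-((fderiv ℝ ω (γ t)) (d t) / ω (γ t))) t := by
    intro t ht
    have h1 : HasDerivAt (fun u => ω (γ u)) ((fderiv ℝ ω (γ t)) (d t)) t :=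
      (hωderiv t ht).comp_hasDerivAt t (hγ' t ht)
    exact (h1.log (hωγpos t ht).ne').const_sub (Real.log (ω a))
  have hvbound : ∀ t : ℝ, t ∈ Ico (0:ℝ) 1 →
      -((fderiv ℝ ω (γ t)) (d t) / ω (γ t)) ≤ Cw * s / (1 - (t * s) ^ 2) := by
    intro t ht
    have ht' : t ∈ Icc (0:ℝ) 1 := ⟨ht.1, ht.2.le⟩
    have h1 : |(fderiv ℝ ω (γ t)) (d t)| ≤ ‖fderiv ℝ ω (γ t)‖ * ‖d t‖ := by
      simpa [Real.norm_eq_abs] using (fderiv ℝ ω (γ t)).le_opNorm (d t)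
    have hsq : (0:ℝ) < 1 - (t * s) ^ 2 := by
      nlinarith [htspos t ht', htsnn t ht']
    have h2 := hd_eq t ht'
    have h3 := hfd_bound t ht'
    set X : ℝ := (fderiv ℝ ω (γ t)) (d t) with hX_def
    rw [← neg_div, div_le_div_iff₀ (hωγpos t ht') hsq]
    have c1 : -X * (1 - (t * s) ^ 2) ≤ |X| * (1 - (t * s) ^ 2) :=
      mul_le_mul_of_nonneg_right (neg_le_abs X) hsq.le
    have c2 : |X| * (1 - (t * s) ^ 2)
        ≤ ‖fderiv ℝ ω (γ t)‖ * ‖d t‖ * (1 - (t * s) ^ 2) :=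
      mul_le_mul_of_nonneg_right h1 hsq.le
    have c3 : ‖fderiv ℝ ω (γ t)‖ * ‖d t‖ * (1 - (t * s) ^ 2)
        = (1 - ‖γ t‖ ^ 2) * ‖fderiv ℝ ω (γ t)‖ * s := by
      rw [mul_assoc, h2]; ring
    have c5 : (1 - ‖γ t‖ ^ 2) * ‖fderiv ℝ ω (γ t)‖ * s ≤ Cw * ω (γ t) * s :=
      mul_le_mul_of_nonneg_right h3 hs0
    calc -X * (1 - (t * s) ^ 2) ≤ |X| * (1 - (t * s) ^ 2) := c1
      _ ≤ ‖fderiv ℝ ω (γ t)‖ * ‖d t‖ * (1 - (t * s) ^ 2) := c2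
      _ = (1 - ‖γ t‖ ^ 2) * ‖fderiv ℝ ω (γ t)‖ * s := c3
      _ ≤ Cw * ω (γ t) * s := c5
      _ = Cw * s * ω (γ t) := by ring
  have hfence1 : ∀ t ∈ Icc (0:ℝ) 1,
      Real.log (ω a) - Real.log (ω (γ t)) ≤ F t := by
    have hγ0 : γ 0 = a := by simp [hγ_def, mobius]
    refine image_le_of_deriv_right_le_deriv_boundary
      (f := fun u => Real.log (ω a) - Real.log (ω (γ u)))
      (f' := fun t => -((fderiv ℝ ω (γ t)) (d t) / ω (γ t)))
      (fun x hx => ((hv x hx).continuousAt).continuousWithinAt)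
      (fun x hx => (hv x ⟨hx.1, hx.2.le⟩).hasDerivWithinAt)
      (by simp [hγ0, hF_def])
      (fun x hx => ((hF' x hx).continuousAt).continuousWithinAt)
      (fun x hx => (hF' x ⟨hx.1, hx.2.le⟩).hasDerivWithinAt)
      hvbound
  -- exponentiate
  have hcomp : ∀ t : ℝ, t ∈ Icc (0:ℝ) 1 →
      ω a ≤ ω (γ t) * (2 ^ (Cw/2) * (1 - t * s) ^ (-(Cw/2))) := by
    intro t ht
    have hp1 : (0:ℝ) < 1 + t * s := by nlinarith [htsnn t ht]
    have hp2 : (0:ℝ) < 1 - t * s := htspos t ht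
    have h1 := hfence1 t ht
    have h2 : ω a ≤ ω (γ t) * Real.exp (F t) := by
      have := Real.exp_le_exp.mpr (by linarith : Real.log (ω a) ≤ Real.log (ω (γ t)) + F t)
      rwa [Real.exp_log (hωpos a ha), Real.exp_add, Real.exp_log (hωγpos t ht)] at this
    have h3 : Real.exp (F t) = (1 + t * s) ^ (Cw/2) * (1 - t * s) ^ (-(Cw/2)) := by
      rw [Real.rpow_def_of_pos hp1, Real.rpow_def_of_pos hp2, ← Real.exp_add, hF_def]
      ring_nf
    have h4 : (1 + t * s) ^ (Cw/2) ≤ (2:ℝ) ^ (Cw/2) :=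
      Real.rpow_le_rpow hp1.le (by nlinarith [htss t ht]) (by positivity)
    have h5 : (0:ℝ) ≤ (1 - t * s) ^ (-(Cw/2)) := Real.rpow_nonneg hp2.le _
    calc ω a ≤ ω (γ t) * Real.exp (F t) := h2
      _ = ω (γ t) * ((1 + t * s) ^ (Cw/2) * (1 - t * s) ^ (-(Cw/2))) := by rw [h3]
      _ ≤ ω (γ t) * ((2:ℝ) ^ (Cw/2) * (1 - t * s) ^ (-(Cw/2))) := by
          apply mul_le_mul_of_nonneg_left _ (hωγpos t ht).le
          exact mul_le_mul_of_nonneg_right h4 h5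
  -- STEP 2 : fencing for f itself
  set G : ℝ → ℂ := fun t => (ω a) • (f (γ t) - f a) with hG_def
  set G' : ℝ → ℂ := fun t => (ω a) • (d t * deriv f (γ t)) with hG'_def
  have hG'at : ∀ t : ℝ, t ∈ Icc (0:ℝ) 1 → HasDerivAt G (G' t) t := by
    intro t ht
    have hfd : HasDerivAt f (deriv f (γ t)) (γ t) :=
      (hf.differentiableAt (hO.mem_nhds (hγmem t ht))).hasDerivAt
    have h1 : HasDerivAt (fun u => f (γ u)) (d t * deriv f (γ t)) t := by
      have := (hfd.hasFDerivAt.restrictScalars ℝ).comp_hasDerivAt t (hγ' t ht)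
      simpa [Function.comp_def, smul_eq_mul] using this
    exact ((h1.sub_const (f a)).const_smul (ω a))
  have hG'bound : ∀ t : ℝ, t ∈ Ico (0:ℝ) 1 →
      ‖G' t‖ ≤ K * 2 ^ (Cw/2) * s * ((1 - t * s) ^ (-(Cw/2)) / (1 - t * s)) := by
    intro t ht
    have ht' : t ∈ Icc (0:ℝ) 1 := ⟨ht.1, ht.2.le⟩
    have hp2 : (0:ℝ) < 1 - t * s := htspos t ht'
    have hsq : (0:ℝ) < 1 - (t * s) ^ 2 := by
      nlinarith [htsnn t ht']
    have hωa : 0 < ω a := hωpos a ha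
    have hnorm : ‖G' t‖ = ω a * (‖d t‖ * ‖deriv f (γ t)‖) := by
      rw [hG'_def]
      simp [norm_smul, Real.norm_eq_abs, abs_of_pos hωa, norm_mul]
    have hfb := hbd (γ t) (hγmem t ht')
    have hcw := hcomp t ht'
    set W : ℝ := 2 ^ (Cw/2) * (1 - t * s) ^ (-(Cw/2)) with hW_def
    have hWpos : 0 < W := by
      rw [hW_def]; positivity
    -- main chain multiplied out
    have hchain : ω a * (‖d t‖ * ‖deriv f (γ t)‖) * (1 - (t * s) ^ 2)
        ≤ K * W * s := by
      have e1 := hd_eq t ht'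
      have e3 : ω a * (‖d t‖ * ‖deriv f (γ t)‖) * (1 - (t * s) ^ 2)
          = (ω a) * ‖deriv f (γ t)‖ * ((1 - ‖γ t‖ ^ 2) * s) := by
        rw [← e1]; ring
      rw [e3]
      have h4 : ω a * ‖deriv f (γ t)‖ ≤ ω (γ t) * W * ‖deriv f (γ t)‖ :=
        mul_le_mul_of_nonneg_right hcw (norm_nonneg _)
      have h5 : (0:ℝ) ≤ (1 - ‖γ t‖ ^ 2) * s :=
        mul_nonneg (hγpos t ht').le hs0
      calc ω a * ‖deriv f (γ t)‖ * ((1 - ‖γ t‖ ^ 2) * s)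
          ≤ ω (γ t) * W * ‖deriv f (γ t)‖ * ((1 - ‖γ t‖ ^ 2) * s) :=
            mul_le_mul_of_nonneg_right h4 h5
        _ = (‖deriv f (γ t)‖ * (1 - ‖γ t‖ ^ 2) * ω (γ t)) * s * W := by ring
        _ ≤ K * s * W := by
            apply mul_le_mul_of_nonneg_right _ hWpos.le
            exact mul_le_mul_of_nonneg_right hfb hs0
        _ = K * W * s := by ring
    rw [hnorm]
    have hle : ω a * (‖d t‖ * ‖deriv f (γ t)‖) * (1 - t * s) ≤ K * W * s := by
      have hmono : (1 - t * s) ≤ 1 - (t * s) ^ 2 := by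
        nlinarith [htsnn t ht', hts1 t ht']
      have hnn : 0 ≤ ω a * (‖d t‖ * ‖deriv f (γ t)‖) := by positivity
      nlinarith [mul_le_mul_of_nonneg_left hmono hnn]
    rw [← le_div_iff₀ hp2] at hle
    calc ω a * (‖d t‖ * ‖deriv f (γ t)‖) ≤ K * W * s / (1 - t * s) := hle
      _ = K * 2 ^ (Cw/2) * s * ((1 - t * s) ^ (-(Cw/2)) / (1 - t * s)) := by
          rw [hW_def]; ring
  -- boundary function for the second fencing
  set C1 : ℝ := K * 2 ^ (Cw/2) * (2 / Cw) with hC1_def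
  set B : ℝ → ℝ := fun t => C1 * ((1 - t * s) ^ (-(Cw/2)) - 1) with hB_def
  have hB' : ∀ t : ℝ, t ∈ Icc (0:ℝ) 1 →
      HasDerivAt B (K * 2 ^ (Cw/2) * s * ((1 - t * s) ^ (-(Cw/2)) / (1 - t * s))) t := by
    intro t ht
    have hp2 : (0:ℝ) < 1 - t * s := htspos t ht
    have l2 : HasDerivAt (fun x : ℝ => 1 - x * s) (-s) t := by
      simpa using ((hasDerivAt_id t).mul_const s).const_sub 1
    have l3 := (l2.rpow_const (p := -(Cw/2)) (Or.inl hp2.ne')).sub_const 1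
    have := l3.const_mul C1
    convert this using 1
    any_goals rfl
    rw [hC1_def, Real.rpow_sub_one hp2.ne']
    field_simp
  have hfence2 : ∀ t ∈ Icc (0:ℝ) 1, ‖G t‖ ≤ B t := by
    have hγ0 : γ 0 = a := by simp [hγ_def, mobius]
    refine image_norm_le_of_norm_deriv_right_le_deriv_boundary'
      (fun x hx => ((hG'at x hx).continuousAt).continuousWithinAt)
      (fun x hx => (hG'at x ⟨hx.1, hx.2.le⟩).hasDerivWithinAt)
      ?_ (fun x hx => ((hB' x hx).continuousAt).continuousWithinAt)
      (fun x hx => (hB' x ⟨hx.1, hx.2.le⟩).hasDerivWithinAt)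
      hG'bound
    have hG0 : G 0 = 0 := by
      rw [hG_def]
      simp only [hγ0]
      simp [hγ_def, mobius]
    have hB0 : B 0 = 0 := by
      rw [hB_def]
      norm_num
    rw [hG0, hB0, norm_zero]
  -- conclude
  have hγ1 : γ 1 = mobius a z := by simp [hγ_def]
  have h1 := hfence2 1 ⟨zero_le_one, le_rfl⟩
  have hωa : 0 < ω a := hωpos a ha
  have hnormG1 : ‖G 1‖ = ω a * ‖f (mobius a z) - f a‖ := by
    rw [hG_def]
    simp [norm_smul, Real.norm_eq_abs, abs_of_pos hωa, hγ1]
  rw [hnormG1] at h1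
  have hC1pos : 0 < C1 := by rw [hC1_def]; positivity
  have hp1s : (0:ℝ) < 1 - s := by linarith
  have hp1r : (0:ℝ) < 1 - r := by linarith
  have hB1 : B 1 ≤ C1 * (1 - r) ^ (-(Cw/2)) := by
    rw [hB_def]
    simp only [one_mul]
    have h2 : (1 - s) ^ (-(Cw/2)) ≤ (1 - r) ^ (-(Cw/2)) :=
      Real.rpow_le_rpow_of_nonpos hp1r (by linarith) (by linarith)
    nlinarith [Real.rpow_nonneg hp1s.le (-(Cw/2))]
  calc ω a * ‖f (mobius a z) - f a‖ ≤ B 1 := h1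
    _ ≤ C1 * (1 - r) ^ (-(Cw/2)) := hB1

/-- For a regular weight `ω` with constant `C_ω < 1` and `f` holomorphic
with `|f'(z)|(1-|z|²)ω(z) ≤ K`, the integral
`∫₀¹ sup_{a ∈ 𝔻, |z| ≤ r} (ω(a)|f_a(z)|)² dr` is finite. -/
theorem integral_sup_sq_hyperbolic_translation_lt_top
    (Cw : ℝ) (hCpos : 0 < Cw) (hClt : Cw < 1)
    (ω : ℂ → ℝ) (hωpos : ∀ z ∈ unitDisc, 0 < ω z)
    (hωC1 : ContDiffOn ℝ 1 ω unitDisc)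
    (hreg : ∀ z ∈ unitDisc, (1 - ‖z‖ ^ 2) * ‖fderivWithin ℝ ω unitDisc z‖ ≤ Cw * ω z)
    (f : ℂ → ℂ) (hf : DifferentiableOn ℂ f unitDisc)
    (K : ℝ) (hK : 0 < K)
    (hbd : ∀ z ∈ unitDisc, ‖deriv f z‖ * (1 - ‖z‖ ^ 2) * ω z ≤ K) :
    (∫⁻ r in Set.Ioo (0 : ℝ) 1,
        ⨆ (a : ℂ) (_ : a ∈ unitDisc) (z : ℂ) (_ : ‖z‖ ≤ r),
          ENNReal.ofReal ((ω a * ‖f (mobius a z) - f a‖) ^ 2)) < ⊤ := by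
  set C1 : ℝ := K * 2 ^ (Cw / 2) * (2 / Cw) with hC1_def
  have hC1pos : 0 < C1 := by rw [hC1_def]; positivity
  have hbound : ∀ r ∈ Set.Ioo (0:ℝ) 1,
      (⨆ (a : ℂ) (_ : a ∈ unitDisc) (z : ℂ) (_ : ‖z‖ ≤ r),
        ENNReal.ofReal ((ω a * ‖f (mobius a z) - f a‖) ^ 2))
      ≤ ENNReal.ofReal (C1 ^ 2 * (1 - r) ^ (-Cw)) := by
    intro r hr
    have hp : (0:ℝ) < 1 - r := by linarith [hr.2]
    have hsq : (C1 * (1 - r) ^ (-(Cw/2))) ^ 2 = C1 ^ 2 * (1 - r) ^ (-Cw) := by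
      rw [mul_pow, ← Real.rpow_natCast ((1 - r) ^ (-(Cw/2))) 2, ← Real.rpow_mul hp.le]
      norm_num
    refine iSup_le fun a => iSup_le fun ha => iSup_le fun z => iSup_le fun hz => ?_
    apply ENNReal.ofReal_le_ofReal
    rw [← hsq]
    have hkey := key_bound Cw hCpos ω hωpos hωC1 hreg f hf K hK hbd hr.2 ha hz
    have hnn : 0 ≤ ω a * ‖f (mobius a z) - f a‖ :=
      mul_nonneg (hωpos a ha).le (norm_nonneg _)
    exact pow_le_pow_left₀ hnn hkey 2
  have hint : IntegrableOn (fun r : ℝ => C1 ^ 2 * (1 - r) ^ (-Cw)) (Set.Ioo 0 1) volume := by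
    have h1 : IntervalIntegrable (fun x : ℝ => x ^ (-Cw)) volume 0 1 :=
      intervalIntegral.intervalIntegrable_rpow' (by linarith)
    have h2 := (h1.comp_sub_left 1).symm
    have h3 : IntegrableOn (fun x : ℝ => (1 - x) ^ (-Cw)) (Set.Ioo 0 1) volume := by
      have h4 := intervalIntegrable_iff.mp (by simpa using h2)
      rw [Set.uIoc_of_le (zero_le_one : (0:ℝ) ≤ 1)] at h4
      exact h4.mono_set Set.Ioo_subset_Ioc_self
    exact h3.const_mul (C1 ^ 2)
  calc (∫⁻ r in Set.Ioo (0 : ℝ) 1,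
        ⨆ (a : ℂ) (_ : a ∈ unitDisc) (z : ℂ) (_ : ‖z‖ ≤ r),
          ENNReal.ofReal ((ω a * ‖f (mobius a z) - f a‖) ^ 2))
      ≤ ∫⁻ r in Set.Ioo (0 : ℝ) 1, ENNReal.ofReal (C1 ^ 2 * (1 - r) ^ (-Cw)) :=
        setLIntegral_mono' measurableSet_Ioo hbound
    _ < ⊤ := hint.setLIntegral_lt_top
end
end

section
/- Let C > 0 and let ω : 𝔻 → (0,∞) be a C¹ weight satisfying (1−|z|²)|∇ω(z)| ≤ C ω(z) for all z ∈ 𝔻. Then ω(z) ≤ e^{C δ(z,w)} ω(w) for all z, w ∈ 𝔻, where δ is the hyperbolic distance on 𝔻. -/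
open Complex MeasureTheory Set Filter

noncomputable section

section HarnackHelpers

private lemma hw_norm_sq_identity (a ζ : ℂ) :
    ‖1 - (starRingEnd ℂ) a * ζ‖ ^ 2 - ‖a - ζ‖ ^ 2 = (1 - ‖a‖ ^ 2) * (1 - ‖ζ‖ ^ 2) := by
  simp only [Complex.sq_norm, Complex.normSq_apply, Complex.sub_re,
    Complex.sub_im, Complex.mul_re, Complex.mul_im, Complex.one_re, Complex.one_im,
    Complex.conj_re, Complex.conj_im]
  ring

private lemma hw_mobius_denom_ne (a ζ : ℂ) (ha : ‖a‖ < 1) (hζ : ‖ζ‖ < 1) :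
    (1 : ℂ) - (starRingEnd ℂ) a * ζ ≠ 0 := by
  intro h
  have h1 : (starRingEnd ℂ) a * ζ = 1 := by linear_combination -h
  have : ‖(starRingEnd ℂ) a * ζ‖ < 1 := by
    rw [norm_mul, RCLike.norm_conj]
    nlinarith [norm_nonneg a, norm_nonneg ζ]
  rw [h1] at this; simp at this

private lemma hw_one_sub_sq_mobius (a ζ : ℂ) (ha : ‖a‖ < 1) (hζ : ‖ζ‖ < 1) :
    1 - ‖mobius a ζ‖ ^ 2
      = (1 - ‖a‖ ^ 2) * (1 - ‖ζ‖ ^ 2) / ‖1 - (starRingEnd ℂ) a * ζ‖ ^ 2 := by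
  have hd := hw_mobius_denom_ne a ζ ha hζ
  have hB : (0:ℝ) < ‖(1:ℂ) - (starRingEnd ℂ) a * ζ‖ ^ 2 :=
    pow_pos (norm_pos_iff.mpr hd) 2
  have e : ‖mobius a ζ‖ ^ 2 = ‖a - ζ‖ ^ 2 / ‖(1:ℂ) - (starRingEnd ℂ) a * ζ‖ ^ 2 := by
    rw [mobius, norm_div, div_pow]
  rw [e, ← hw_norm_sq_identity a ζ, eq_div_iff hB.ne', sub_mul, div_mul_cancel₀ _ hB.ne']
  ring

private lemma hw_num_pos (a ζ : ℂ) (ha : ‖a‖ < 1) (hζ : ‖ζ‖ < 1) :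
    (0:ℝ) < (1 - ‖a‖ ^ 2) * (1 - ‖ζ‖ ^ 2) := by
  have h1 : ‖a‖ ^ 2 < 1 := by nlinarith [norm_nonneg a]
  have h2 : ‖ζ‖ ^ 2 < 1 := by nlinarith [norm_nonneg ζ]
  nlinarith

private lemma hw_mobius_norm_lt (a ζ : ℂ) (ha : ‖a‖ < 1) (hζ : ‖ζ‖ < 1) :
    ‖mobius a ζ‖ < 1 := by
  have h := hw_one_sub_sq_mobius a ζ ha hζ
  have hd : (0:ℝ) < ‖(1:ℂ) - (starRingEnd ℂ) a * ζ‖ ^ 2 :=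
    pow_pos (norm_pos_iff.mpr (hw_mobius_denom_ne a ζ ha hζ)) 2
  have hnum := hw_num_pos a ζ ha hζ
  have : 0 < 1 - ‖mobius a ζ‖ ^ 2 := by rw [h]; positivity
  nlinarith [norm_nonneg (mobius a ζ)]

private lemma hw_mobius_mobius (a ζ : ℂ) (ha : ‖a‖ < 1) (hζ : ‖ζ‖ < 1) :
    mobius a (mobius a ζ) = ζ := by
  have hd := hw_mobius_denom_ne a ζ ha hζ
  have hd2 : (1:ℂ) - (starRingEnd ℂ) a * ((a - ζ)/(1 - (starRingEnd ℂ) a * ζ)) ≠ 0 := by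
    have := hw_mobius_denom_ne a (mobius a ζ) ha (hw_mobius_norm_lt a ζ ha hζ)
    simpa [mobius] using this
  have ha2 : (1:ℂ) - (starRingEnd ℂ) a * a ≠ 0 := hw_mobius_denom_ne a a ha ha
  unfold mobius
  rw [div_eq_iff hd2]
  linear_combination (-(a - ζ)) * (mul_inv_cancel₀ hd)

private lemma hw_hasDerivAt_mobius (a ζ : ℂ) (h : (1:ℂ) - (starRingEnd ℂ) a * ζ ≠ 0) :
    HasDerivAt (mobius a)
      (((starRingEnd ℂ) a * a - 1) / ((1 - (starRingEnd ℂ) a * ζ) ^ 2)) ζ := by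
  have h1 : HasDerivAt (fun s : ℂ => a - s) (-1) ζ := (hasDerivAt_id ζ).const_sub a
  have h2 : HasDerivAt (fun s : ℂ => (1:ℂ) - (starRingEnd ℂ) a * s) (-((starRingEnd ℂ) a)) ζ := by
    simpa using (((hasDerivAt_id ζ).const_mul ((starRingEnd ℂ) a)).const_sub 1)
  have := h1.div h2 h
  exact this.congr_deriv (by ring)

private lemma hw_norm_conj_mul_self_sub_one (a : ℂ) (ha : ‖a‖ < 1) :
    ‖(starRingEnd ℂ) a * a - 1‖ = 1 - ‖a‖ ^ 2 := by
  have : (starRingEnd ℂ) a * a - 1 = ((‖a‖ ^ 2 - 1 : ℝ) : ℂ) := by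
    rw [mul_comm, Complex.mul_conj]
    push_cast
    rw [Complex.normSq_eq_norm_sq]
    push_cast
    ring
  rw [this, Complex.norm_real, Real.norm_eq_abs, abs_of_nonpos (by nlinarith [norm_nonneg a])]
  ring

end HarnackHelpers

/-- A `C¹` weight `ω` satisfying `(1-|z|²)|∇ω(z)| ≤ C ω(z)` on the unit disc
satisfies the Harnack-type estimate `ω(z) ≤ e^{C δ(z,w)} ω(w)` for the hyperbolic
distance `δ`. -/
theorem weight_le_exp_hypDist_mul
    (C : ℝ) (hC : 0 < C)
    (ω : ℂ → ℝ) (hωpos : ∀ z ∈ unitDisc, 0 < ω z)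
    (hωC1 : ContDiffOn ℝ 1 ω unitDisc)
    (hreg : ∀ z ∈ unitDisc, (1 - ‖z‖ ^ 2) * ‖fderivWithin ℝ ω unitDisc z‖ ≤ C * ω z) :
    ∀ z ∈ unitDisc, ∀ w ∈ unitDisc,
      ω z ≤ Real.exp (C * hypDist z w) * ω w := by
  intro z hz w hw
  have hz1 : ‖z‖ < 1 := by simpa [unitDisc] using hz
  have hw1 : ‖w‖ < 1 := by simpa [unitDisc] using hw
  set u : ℂ := mobius z w with hu
  set r : ℝ := ‖u‖ with hrdef
  have hr1 : r < 1 := hw_mobius_norm_lt z w hz1 hw1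
  have hr0 : (0:ℝ) ≤ r := norm_nonneg _
  set γ : ℝ → ℂ := fun t => mobius z ((t : ℂ) * u) with hγ
  -- basic facts for t ∈ Icc 0 1
  have htu_norm : ∀ t ∈ Icc (0:ℝ) 1, ‖(t : ℂ) * u‖ = t * r := by
    intro t ht
    rw [norm_mul, Complex.norm_real, Real.norm_eq_abs, _root_.abs_of_nonneg ht.1]
  have htu_lt : ∀ t ∈ Icc (0:ℝ) 1, ‖(t : ℂ) * u‖ < 1 := by
    intro t ht
    rw [htu_norm t ht]
    nlinarith [ht.1, ht.2]
  have hγlt : ∀ t ∈ Icc (0:ℝ) 1, ‖γ t‖ < 1 := fun t ht =>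
    hw_mobius_norm_lt z _ hz1 (htu_lt t ht)
  have hγmem : ∀ t ∈ Icc (0:ℝ) 1, γ t ∈ unitDisc := by
    intro t ht
    simpa [unitDisc, mem_ball_iff_norm] using hγlt t ht
  have hQpos : ∀ t ∈ Icc (0:ℝ) 1, (0:ℝ) < 1 - (t * r) ^ 2 := by
    intro t ht
    have h1 : 0 ≤ t * r := mul_nonneg ht.1 hr0
    have h2 : t * r < 1 := by nlinarith [ht.1, ht.2]
    nlinarith
  -- the comparison function
  set F : ℝ → ℝ := fun s =>
    Real.log (ω (γ s)) + C * ((1/2) * (Real.log (1 + s * r) - Real.log (1 - s * r))) with hF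
  -- derivative of F exists and is nonnegative on Icc 0 1
  have hFkey : ∀ t ∈ Icc (0:ℝ) 1, ∃ d, HasDerivAt F d t ∧ 0 ≤ d := by
    intro t ht
    have hden : (1:ℂ) - (starRingEnd ℂ) z * ((t : ℂ) * u) ≠ 0 :=
      hw_mobius_denom_ne z _ hz1 (htu_lt t ht)
    set gv : ℂ := ((starRingEnd ℂ) z * z - 1) / ((1 - (starRingEnd ℂ) z * ((t:ℂ) * u)) ^ 2) * u
      with hgv
    have hγt : HasDerivAt γ gv t := by
      have hmob := hw_hasDerivAt_mobius z ((t : ℂ) * u) hden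
      have hlin : HasDerivAt (fun s : ℂ => s * u) u ((t : ℂ)) := hasDerivAt_mul_const u
      have hcomp := hmob.comp ((t : ℂ)) hlin
      have := hcomp.comp_ofReal
      simpa [Function.comp] using this
    -- norm computations
    have hBpos : (0:ℝ) < ‖(1:ℂ) - (starRingEnd ℂ) z * ((t:ℂ) * u)‖ ^ 2 :=
      pow_pos (norm_pos_iff.mpr hden) 2
    have hgvnorm : ‖gv‖ = (1 - ‖z‖ ^ 2) / ‖(1:ℂ) - (starRingEnd ℂ) z * ((t:ℂ) * u)‖ ^ 2 * r := by
      rw [hgv, norm_mul, norm_div, hw_norm_conj_mul_self_sub_one z hz1, norm_pow]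
    have hP : 1 - ‖γ t‖ ^ 2
        = (1 - ‖z‖ ^ 2) * (1 - (t * r) ^ 2) / ‖(1:ℂ) - (starRingEnd ℂ) z * ((t:ℂ) * u)‖ ^ 2 := by
      rw [hγ]
      simp only
      rw [hw_one_sub_sq_mobius z _ hz1 (htu_lt t ht), htu_norm t ht]
    have hQ := hQpos t ht
    have hkey : ‖gv‖ * (1 - (t * r) ^ 2) = r * (1 - ‖γ t‖ ^ 2) := by
      rw [hgvnorm, hP]; field_simp
    -- derivative of ω ∘ γ
    have hωdiff : DifferentiableAt ℝ ω (γ t) := by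
      have : ContDiffAt ℝ 1 ω (γ t) :=
        hωC1.contDiffAt ((Metric.isOpen_ball).mem_nhds (hγmem t ht))
      exact this.differentiableAt one_ne_zero
    set D : ℂ →L[ℝ] ℝ := fderiv ℝ ω (γ t) with hD
    have hωγ : HasDerivAt (fun s => ω (γ s)) (D gv) t :=
      hωdiff.hasFDerivAt.comp_hasDerivAt t hγt
    have hWpos : 0 < ω (γ t) := hωpos _ (hγmem t ht)
    have hlog : HasDerivAt (fun s => Real.log (ω (γ s))) (D gv / ω (γ t)) t :=
      hωγ.log hWpos.ne'
    -- derivative of the log-factor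
    have h1p : (0:ℝ) < 1 + t * r := by nlinarith [mul_nonneg ht.1 hr0]
    have h1m : (0:ℝ) < 1 - t * r := by nlinarith [hQ, mul_nonneg ht.1 hr0]
    have hA1 : HasDerivAt (fun s : ℝ => Real.log (1 + s * r)) (r / (1 + t * r)) t := by
      have := ((hasDerivAt_mul_const r (x := t)).const_add 1).log h1p.ne'
      simpa using this
    have hA2 : HasDerivAt (fun s : ℝ => Real.log (1 - s * r)) (-r / (1 - t * r)) t := by
      have := ((hasDerivAt_mul_const r (x := t)).const_sub 1).log h1m.ne'
      simpa using this
    refine ⟨D gv / ω (γ t) + C * ((1/2) * (r / (1 + t * r) - -r / (1 - t * r))), ?_, ?_⟩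
    · exact hlog.add (((hA1.sub hA2).const_mul (1/2)).const_mul C)
    · -- nonnegativity
      have hPpos : 0 < 1 - ‖γ t‖ ^ 2 := by
        have := hγlt t ht
        nlinarith [norm_nonneg (γ t)]
      have hregt : ‖D‖ * (1 - ‖γ t‖ ^ 2) ≤ C * ω (γ t) := by
        have := hreg (γ t) (hγmem t ht)
        rw [show fderivWithin ℝ ω unitDisc (γ t) = fderiv ℝ ω (γ t) from
          fderivWithin_of_isOpen Metric.isOpen_ball (hγmem t ht)] at this
        linarith [this]
      have habs : |D gv| ≤ ‖D‖ * ‖gv‖ := by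
        have := D.le_opNorm gv
        rwa [Real.norm_eq_abs] at this
      have hgle : ‖D‖ * ‖gv‖ * (1 - (t * r) ^ 2) ≤ C * ω (γ t) * r := by
        calc ‖D‖ * ‖gv‖ * (1 - (t * r) ^ 2) = ‖D‖ * (r * (1 - ‖γ t‖ ^ 2)) := by
              rw [mul_assoc, hkey]
          _ = (‖D‖ * (1 - ‖γ t‖ ^ 2)) * r := by ring
          _ ≤ (C * ω (γ t)) * r := mul_le_mul_of_nonneg_right hregt hr0
      have hsum : (1/2) * (r / (1 + t * r) - -r / (1 - t * r)) = r / (1 - (t * r) ^ 2) := by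
        rw [div_sub_div _ _ h1p.ne' h1m.ne']
        rw [show (1 + t * r) * (1 - t * r) = 1 - (t * r) ^ 2 from by ring]
        rw [show r * (1 - t * r) - (1 + t * r) * -r = 2 * r from by ring]
        ring
      rw [hsum]
      have hlow : -(C * (r / (1 - (t * r) ^ 2))) * ω (γ t) ≤ D gv := by
        have h2 : ‖D‖ * ‖gv‖ ≤ C * ω (γ t) * r / (1 - (t * r) ^ 2) := by
          rw [le_div_iff₀ hQ]; exact hgle
        have h3 : -(C * ω (γ t) * r / (1 - (t * r) ^ 2)) ≤ D gv := by
          have := (abs_le.mp habs).1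
          linarith
        calc -(C * (r / (1 - (t * r) ^ 2))) * ω (γ t)
            = -(C * ω (γ t) * r / (1 - (t * r) ^ 2)) := by ring
          _ ≤ D gv := h3
      have : -(C * (r / (1 - (t * r) ^ 2))) ≤ D gv / ω (γ t) := by
        rw [le_div_iff₀ hWpos]; exact hlow
      linarith
  -- F is monotone on [0,1]
  have hmono : MonotoneOn F (Icc (0:ℝ) 1) := by
    apply monotoneOn_of_deriv_nonneg (convex_Icc 0 1)
    · intro t ht
      obtain ⟨d, hd, -⟩ := hFkey t ht
      exact hd.continuousAt.continuousWithinAt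
    · intro t ht
      rw [interior_Icc] at ht
      obtain ⟨d, hd, -⟩ := hFkey t (Ioo_subset_Icc_self ht)
      exact hd.differentiableAt.differentiableWithinAt
    · intro t ht
      rw [interior_Icc] at ht
      obtain ⟨d, hd, hd0⟩ := hFkey t (Ioo_subset_Icc_self ht)
      rw [hd.deriv]; exact hd0
  have hF01 : F 0 ≤ F 1 := hmono (by constructor <;> norm_num) (by constructor <;> norm_num)
    (by norm_num)
  -- evaluate endpoints
  have hγ0 : γ 0 = z := by
    rw [hγ]; simp [mobius]
  have hγ1 : γ 1 = w := by
    rw [hγ]; simp only [Complex.ofReal_one, one_mul, hu]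
    exact hw_mobius_mobius z w hz1 hw1
  have hF0 : F 0 = Real.log (ω z) := by
    rw [hF]; simp [hγ0]
  have hF1 : F 1 = Real.log (ω w) + C * hypDist z w := by
    rw [hF]
    simp only [hγ1, one_mul]
    have h1p : (0:ℝ) < 1 + r := by linarith
    have h1m : (0:ℝ) < 1 - r := by linarith
    rw [hypDist, show ‖mobius z w‖ = r from rfl, Real.log_div h1p.ne' h1m.ne']
    try ring
  have hlog_ineq : Real.log (ω z) ≤ Real.log (ω w) + C * hypDist z w := by
    rw [← hF0, ← hF1]; exact hF01
  have hωz : 0 < ω z := hωpos z hz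
  have hωw : 0 < ω w := hωpos w hw
  have := Real.exp_le_exp.mpr hlog_ineq
  rwa [Real.exp_log hωz, Real.exp_add, Real.exp_log hωw, mul_comm (ω w)] at this
end
end

section
/- For every w ∈ 𝔻 \ {0} and every z ∈ 𝔻 \ S(I_{w*}), one has |β_w(z)| ≤ 3. Consequently, for every δ > 0 there exists δ′ > 0 such that |β_w(z)| ≤ 3 whenever w ∈ 𝔻 \ {0} with 1 − |w| ≤ δ′ and z ∈ 𝔻 with |z| ≤ 1 − δ. -/
open Complex MeasureTheory Set Filter

noncomputable section

lemma normSq_key (a z : ℂ) : Complex.normSq (1 - (starRingEnd ℂ) a * z) - Complex.normSq (a - z)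
    = (1 - Complex.normSq a) * (1 - Complex.normSq z) := by
  simp [Complex.normSq_apply, Complex.mul_re, Complex.mul_im]
  ring

lemma one_sub_ne (x : ℂ) (hx : ‖x‖ < 1) : (1:ℂ) - x ≠ 0 := by
  intro h
  rw [sub_eq_zero] at h
  rw [← h] at hx
  simp at hx

lemma mobius_norm_lt (a z : ℂ) (ha : ‖a‖ < 1) (hz : ‖z‖ < 1) : ‖mobius a z‖ < 1 := by
  have hsz : ‖(starRingEnd ℂ) a * z‖ < 1 := by
    rw [norm_mul, RCLike.norm_conj]
    calc ‖a‖ * ‖z‖ ≤ 1 * ‖z‖ := mul_le_mul_of_nonneg_right ha.le (norm_nonneg z)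
    _ = ‖z‖ := one_mul _
    _ < 1 := hz
  have hd : (1:ℂ) - (starRingEnd ℂ) a * z ≠ 0 := one_sub_ne _ hsz
  have hkey := normSq_key a z
  have hpos : 0 < (1 - Complex.normSq a) * (1 - Complex.normSq z) := by
    have h1 : Complex.normSq a < 1 := by
      rw [← Complex.sq_norm]
      nlinarith [norm_nonneg a, ha]
    have h2 : Complex.normSq z < 1 := by
      rw [← Complex.sq_norm]
      nlinarith [norm_nonneg z, hz]
    nlinarith
  have hlt : Complex.normSq (a - z) < Complex.normSq (1 - (starRingEnd ℂ) a * z) := by linarith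
  have hnn : ‖a - z‖ < ‖1 - (starRingEnd ℂ) a * z‖ := by
    rw [Complex.norm_def, Complex.norm_def]
    exact Real.sqrt_lt_sqrt (Complex.normSq_nonneg _) hlt
  rw [mobius, norm_div, div_lt_one (norm_pos_iff.mpr hd)]
  exact hnn

/-- If `‖z‖ < ‖u‖ < 1` then `z` is strictly inside the half-plane boundary. -/
lemma re_conj_mul_mobius_pos (u z : ℂ) (h1 : ‖z‖ < ‖u‖) (h2 : ‖u‖ < 1) :
    0 < ((starRingEnd ℂ) u * mobius u z).re := by
  have hu0 : 0 < ‖u‖ := lt_of_le_of_lt (norm_nonneg z) h1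
  set s : ℂ := (starRingEnd ℂ) u * z with hs
  have hsn : ‖s‖ < ‖u‖ ^ 2 := by
    rw [hs, norm_mul, RCLike.norm_conj, sq]
    exact mul_lt_mul_of_pos_left h1 hu0
  have hs1 : ‖s‖ < 1 := hsn.trans (by nlinarith)
  have hd : (1:ℂ) - s ≠ 0 := one_sub_ne _ hs1
  have hcu : (starRingEnd ℂ) u * u = (Complex.normSq u : ℂ) := by
    rw [mul_comm]; exact Complex.mul_conj u
  have heq : (starRingEnd ℂ) u * mobius u z = ((Complex.normSq u : ℂ) - s) / (1 - s) := by
    rw [mobius, mul_div_assoc', mul_sub, hcu, ← hs]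
  rw [heq, Complex.div_re]
  have hnsq : 0 < Complex.normSq (1 - s) := Complex.normSq_pos.mpr hd
  have hre : |s.re| ≤ ‖s‖ := Complex.abs_re_le_norm s
  have hA : Complex.normSq u = ‖u‖ ^ 2 := by rw [← Complex.sq_norm]
  have h3 : ((Complex.normSq u : ℂ) - s).re = Complex.normSq u - s.re := by simp
  have h4 : ((Complex.normSq u : ℂ) - s).im = -s.im := by simp
  have h5 : ((1:ℂ) - s).re = 1 - s.re := by simp
  have h6 : ((1:ℂ) - s).im = -s.im := by simp
  rw [h3, h4, h5, h6, ← add_div]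
  apply div_pos _ hnsq
  have habs : |s.re| < ‖u‖ ^ 2 := lt_of_le_of_lt hre hsn
  have habs1 : |s.re| < 1 := lt_of_le_of_lt hre hs1
  rw [abs_lt] at habs habs1
  nlinarith [sq_nonneg s.im]

/-- Core estimate: `‖Log (e/(1+u))‖ ≤ 3` when `‖u‖ < 1` and `Re u ≥ 0`. -/
lemma core_log_bound (u : ℂ) (hu : ‖u‖ < 1) (hre : 0 ≤ u.re) :
    ‖Complex.log ((Real.exp 1 : ℂ) / (1 + u))‖ ≤ 3 := by
  set ζ : ℂ := 1 + u with hζ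
  have hζre : 1 ≤ ζ.re := by simp [hζ]; linarith
  have hζ0 : ζ ≠ 0 := by
    intro h
    have := congrArg Complex.re h
    simp at this
    linarith [hζre, this]
  have habs1 : 1 ≤ ‖ζ‖ := le_trans hζre (Complex.re_le_norm ζ)
  have habs2 : ‖ζ‖ ≤ 2 := by
    have h := norm_add_le (1:ℂ) u
    rw [norm_one] at h
    have hz : ‖ζ‖ = ‖ζ‖ := rfl
    rw [hz, hζ]
    linarith
  set x : ℂ := (Real.exp 1 : ℂ) / ζ with hx
  have hx0 : x ≠ 0 :=
    div_ne_zero (Complex.ofReal_ne_zero.mpr (Real.exp_ne_zero 1)) hζ0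
  have hxabs : ‖x‖ = Real.exp 1 / ‖ζ‖ := by
    rw [hx, norm_div]
    congr 1
    rw [Complex.norm_real, Real.norm_eq_abs, abs_of_pos (Real.exp_pos 1)]
  have hxre : 0 ≤ x.re := by
    rw [hx, Complex.div_re, Complex.ofReal_re, Complex.ofReal_im]
    have hnsq : 0 < Complex.normSq ζ := Complex.normSq_pos.mpr hζ0
    have he : 0 < Real.exp 1 := Real.exp_pos 1
    have hzr : 0 < ζ.re := by linarith
    rw [zero_mul, zero_div, add_zero]
    positivity
  have harg : |Complex.arg x| ≤ Real.pi / 2 := Complex.abs_arg_le_pi_div_two_iff.mpr hxre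
  have hlog : |Real.log (‖x‖)| ≤ 1 := by
    rw [hxabs, Real.log_div (by positivity) (by linarith), Real.log_exp]
    have hl0 : 0 ≤ Real.log (‖ζ‖) := Real.log_nonneg habs1
    have hl2 : Real.log (‖ζ‖) ≤ Real.log 2 := Real.log_le_log (by linarith) habs2
    have : Real.log 2 < 0.6931471808 := Real.log_two_lt_d9
    rw [abs_le]
    constructor <;> linarith
  calc ‖Complex.log x‖ = ‖Complex.log x‖ := rfl
    _ ≤ |(Complex.log x).re| + |(Complex.log x).im| := Complex.norm_le_abs_re_add_abs_im _
    _ = |Real.log (‖x‖)| + |Complex.arg x| := by rw [Complex.log_re, Complex.log_im]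
    _ ≤ 1 + Real.pi / 2 := add_le_add hlog harg
    _ ≤ 3 := by linarith [Real.pi_le_four]

lemma wstar_eq (w : ℂ) :
    wstar w = (((1 - Real.sqrt (1 - ‖w‖ ^ 2)) / ‖w‖ ^ 2 : ℝ) : ℂ) * w := rfl

/-- The scaling factor in `wstar` is positive for `0 < ‖w‖ < 1`. -/
lemma wstar_t_pos (w : ℂ) (h0 : w ≠ 0) (h1 : ‖w‖ < 1) :
    0 < (1 - Real.sqrt (1 - ‖w‖ ^ 2)) / ‖w‖ ^ 2 := by
  have hw0 : 0 < ‖w‖ := norm_pos_iff.mpr h0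
  apply div_pos _ (by positivity)
  have hlt : Real.sqrt (1 - ‖w‖ ^ 2) < 1 := by
    have h := Real.sqrt_lt_sqrt (show (0:ℝ) ≤ 1 - ‖w‖ ^ 2 by nlinarith)
      (show 1 - ‖w‖ ^ 2 < 1 by nlinarith)
    simpa using h
  linarith

lemma wstar_norm (w : ℂ) (h0 : w ≠ 0) (h1 : ‖w‖ < 1) :
    ‖wstar w‖ = (1 - Real.sqrt (1 - ‖w‖ ^ 2)) / ‖w‖ := by
  have hw0 : 0 < ‖w‖ := norm_pos_iff.mpr h0
  have ht := wstar_t_pos w h0 h1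
  have hne : ‖w‖ ≠ 0 := hw0.ne'
  rw [wstar_eq, norm_mul, Complex.norm_real, Real.norm_eq_abs, abs_of_pos ht]
  rw [div_mul_eq_mul_div, sq, ← div_div, mul_div_assoc, div_self hne, mul_one]

lemma wstar_norm_lt (w : ℂ) (h0 : w ≠ 0) (h1 : ‖w‖ < 1) : ‖wstar w‖ < 1 := by
  have hw0 : 0 < ‖w‖ := norm_pos_iff.mpr h0
  rw [wstar_norm w h0 h1, div_lt_one hw0]
  have h2 : (1 - ‖w‖ ^ 2) ≤ Real.sqrt (1 - ‖w‖ ^ 2) := by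
    have hx : 0 ≤ 1 - ‖w‖ ^ 2 := by nlinarith
    have h3 := Real.sqrt_le_sqrt (show (1 - ‖w‖^2)^2 ≤ 1 - ‖w‖^2 by nlinarith)
    rwa [Real.sqrt_sq hx] at h3
  nlinarith

/-- Main estimate given positivity of the half-plane functional. -/
lemma betaB_le_three (w z : ℂ) (h0 : w ≠ 0) (h1 : ‖w‖ < 1) (hz : ‖z‖ < 1)
    (hre : 0 < ((starRingEnd ℂ) (wstar w) * mobius (wstar w) z).re) :
    ‖betaB w z‖ ≤ 3 := by
  set t : ℝ := (1 - Real.sqrt (1 - ‖w‖ ^ 2)) / ‖w‖ ^ 2 with hT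
  have ht : 0 < t := wstar_t_pos w h0 h1
  set m : ℂ := mobius (wstar w) z with hm
  set u : ℂ := (starRingEnd ℂ) w * m with hu
  have hsplit : (starRingEnd ℂ) (wstar w) * m = (t : ℂ) * u := by
    rw [wstar_eq, map_mul, Complex.conj_ofReal, hu, hT]
    ring
  have hure : 0 ≤ u.re := by
    have hmul : ((t : ℂ) * u).re = t * u.re := by
      rw [Complex.mul_re, Complex.ofReal_re, Complex.ofReal_im, zero_mul, sub_zero]
    rw [hsplit, hmul] at hre
    nlinarith
  have hun : ‖u‖ < 1 := by
    rw [hu, norm_mul, RCLike.norm_conj]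
    have hmn : ‖m‖ < 1 := mobius_norm_lt _ _ (wstar_norm_lt w h0 h1) hz
    calc ‖w‖ * ‖m‖ ≤ 1 * ‖m‖ := mul_le_mul_of_nonneg_right h1.le (norm_nonneg m)
      _ = ‖m‖ := one_mul _
      _ < 1 := hmn
  exact core_log_bound u hun hure

/-- Outside the Carleson box `S(I_{w*})` the building block `β_w` is
bounded by `3`; in particular for every `δ > 0` there is `δ' > 0` such that
`|β_w(z)| ≤ 3` whenever `1 - |w| ≤ δ'` and `|z| ≤ 1 - δ`. -/
theorem betaB_bounded_off_carlesonBox :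
    (∀ w ∈ unitDisc, w ≠ 0 → ∀ z ∈ unitDisc, z ∉ carlesonBox (wstar w) →
      ‖betaB w z‖ ≤ 3) ∧
    (∀ δ > 0, ∃ δ' > 0, ∀ w ∈ unitDisc, w ≠ 0 → 1 - ‖w‖ ≤ δ' →
      ∀ z : ℂ, ‖z‖ ≤ 1 - δ → ‖betaB w z‖ ≤ 3) := by
  constructor
  · intro w hw hw0 z hz hbox
    have hwn : ‖w‖ < 1 := by simpa [unitDisc] using hw
    have hzn : ‖z‖ < 1 := by simpa [unitDisc] using hz
    apply betaB_le_three w z hw0 hwn hzn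
    by_contra h
    push_neg at h
    exact hbox ⟨hz, h⟩
  · intro δ hδ
    refine ⟨min (1/2) (δ^2/8), by positivity, ?_⟩
    intro w hw hw0 hwδ z hzδ
    have hwn : ‖w‖ < 1 := by simpa [unitDisc] using hw
    have hzn : ‖z‖ < 1 := lt_of_le_of_lt hzδ (by linarith)
    have hw0' : 0 < ‖w‖ := norm_pos_iff.mpr hw0
    have hr2 : (1:ℝ)/2 ≤ ‖w‖ := by
      have := hwδ.trans (min_le_left _ _)
      linarith
    have hsq : Real.sqrt (1 - ‖w‖ ^ 2) ≤ δ / 2 := by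
      have hx : (1 - ‖w‖ ^ 2) ≤ (δ/2)^2 := by
        have h2 : 1 - ‖w‖ ≤ δ^2/8 := hwδ.trans (min_le_right _ _)
        nlinarith
      calc Real.sqrt (1 - ‖w‖ ^ 2) ≤ Real.sqrt ((δ/2)^2) := Real.sqrt_le_sqrt hx
        _ = δ/2 := Real.sqrt_sq (by positivity)
    have hzw : ‖z‖ < ‖wstar w‖ := by
      rw [wstar_norm w hw0 hwn]
      have key : Real.sqrt (1 - ‖w‖ ^ 2) < (1 - ‖w‖) + δ * ‖w‖ := by
        have : δ/2 ≤ δ * ‖w‖ := by nlinarith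
        linarith
      rw [lt_div_iff₀ hw0']
      calc ‖z‖ * ‖w‖ ≤ (1 - δ) * ‖w‖ := by
            apply mul_le_mul_of_nonneg_right hzδ hw0'.le
        _ < 1 - Real.sqrt (1 - ‖w‖ ^ 2) := by nlinarith
    apply betaB_le_three w z hw0 hwn hzn
    exact re_conj_mul_mobius_pos (wstar w) z hzw (wstar_norm_lt w hw0 hwn)
end
end
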